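/- Let $k_0 \geq 0$ and let $\Psi : [k_0,\infty) \to [0,\infty)$ be nonincreasing. If there exist constants $c, a > 0$ and $b > 1$ such that $\Psi(h) \leq \frac{c}{(h-k)^a}[\Psi(k)]^b$ for all $h > k > k_0$, then $\Psi(k_0 + d) = 0$, where $d^a = c\, 2^{ab/(b-1)} [\Psi(k_0)]^{b-1}$. -/
import Mathlib


theorem key_alg (c a b d P μ t : ℝ) (hc : 0 < c) (ha : 0 < a) (hb : 1 < b)
    (hP : 0 < P) (hd0 : 0 < d) (hμdef : μ = a / (b-1))
    (hda : d ^ a = c * 2 ^ (a * b / (b - 1)) * P ^ (b - 1)) :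
    c / (d * 2 ^ (-(t+1))) ^ a * (P * 2 ^ (-t * μ)) ^ b
      = P * 2 ^ (-(t+1) * μ) := by
  have h2 : (0:ℝ) ≤ 2 := by norm_num
  have hb1 : 0 < b - 1 := by linarith
  have hPb : P ^ b = P * P ^ (b-1) := by
    rw [show b = 1 + (b-1) by ring, Real.rpow_add hP, Real.rpow_one]
    ring_nf
  rw [Real.mul_rpow hd0.le (Real.rpow_nonneg h2 _),
      Real.mul_rpow hP.le (Real.rpow_nonneg h2 _),
      ← Real.rpow_mul h2, ← Real.rpow_mul h2, hda, hPb]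
  rw [div_mul_eq_mul_div, div_eq_iff (by positivity)]
  have comb : ∀ X Y : ℝ, (2:ℝ)^X * (2:ℝ)^Y = 2^(X+Y) :=
    fun X Y => (Real.rpow_add two_pos X Y).symm
  calc c * (P * P ^ (b-1) * 2 ^ (-t * μ * b))
      = (c * P * P ^ (b-1)) * 2 ^ (-t * μ * b) := by ring
    _ = (c * P * P ^ (b-1)) * (2 ^ (-(t+1) * μ) * (2 ^ (a*b/(b-1)) * 2 ^ (-(t+1) * a))) := by
        rw [comb, comb]
        congr 1
        subst hμdef
        field_simp
        ring
    _ = P * 2 ^ (-(t+1) * μ) * (c * 2 ^ (a*b/(b-1)) * P ^ (b-1) * 2 ^ (-(t+1) * a)) := by ring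

/-- Stampacchia's iteration lemma. -/
theorem stampacchia_iteration
    (k₀ : ℝ) (hk₀ : 0 ≤ k₀) (Ψ : ℝ → ℝ)
    (hΨnonneg : ∀ k, k₀ ≤ k → 0 ≤ Ψ k)
    (hΨmono : AntitoneOn Ψ (Set.Ici k₀))
    (c a b : ℝ) (hc : 0 < c) (ha : 0 < a) (hb : 1 < b)
    (hiter : ∀ h k : ℝ, k₀ < k → k < h → Ψ h ≤ c / (h - k) ^ a * (Ψ k) ^ b)
    (d : ℝ) (hd : 0 ≤ d)
    (hda : d ^ a = c * 2 ^ (a * b / (b - 1)) * (Ψ k₀) ^ (b - 1)) :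
    Ψ (k₀ + d) = 0 := by
  have hb1 : 0 < b - 1 := by linarith
  have hb0 : 0 < b := by linarith
  set μ := a / (b - 1) with hμdef
  have hμ : 0 < μ := div_pos ha hb1
  have hkd : k₀ ≤ k₀ + d := by linarith
  have hP0 : 0 ≤ Ψ k₀ := hΨnonneg k₀ le_rfl
  have hnn : 0 ≤ Ψ (k₀ + d) := hΨnonneg _ hkd
  rcases hP0.eq_or_lt with hP | hP
  · have h1 : Ψ (k₀ + d) ≤ Ψ k₀ := hΨmono Set.self_mem_Ici (Set.mem_Ici.mpr hkd) hkd
    linarith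
  -- d > 0
  have hd0 : 0 < d := by
    rcases hd.eq_or_lt with h | h
    · exfalso
      rw [← h, Real.zero_rpow ha.ne'] at hda
      have h1 := Real.rpow_pos_of_pos hP (b - 1)
      have h2 := Real.rpow_pos_of_pos (by norm_num : (0:ℝ) < 2) (a * b / (b - 1))
      nlinarith [mul_pos (mul_pos hc h2) h1]
    · exact h
  -- extended iteration inequality allowing k = k₀
  have hiter' : ∀ h k : ℝ, k₀ ≤ k → k < h → Ψ h ≤ c / (h - k) ^ a * (Ψ k) ^ b := by
    intro h k hk hkh
    rcases hk.lt_or_eq with h' | h'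
    · exact hiter h k h' hkh
    · subst h'
      have hhk : 0 < h - k₀ := sub_pos.mpr hkh
      have hev : ∀ᶠ ε in nhdsWithin 0 (Set.Ioi 0),
          Ψ h ≤ c / (h - k₀ - ε) ^ a * (Ψ k₀) ^ b := by
        filter_upwards [Ioo_mem_nhdsGT_of_mem
          (Set.mem_Ico.mpr ⟨le_rfl, hhk⟩)] with ε hε
        obtain ⟨hε0, hεlt⟩ := hε
        have hkε : k₀ < k₀ + ε := by linarith
        have h1 := hiter h (k₀ + ε) hkε (by linarith)
        have h2 : Ψ (k₀ + ε) ≤ Ψ k₀ := hΨmono Set.self_mem_Ici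
          (Set.mem_Ici.mpr hkε.le) hkε.le
        have h3 : (Ψ (k₀ + ε)) ^ b ≤ (Ψ k₀) ^ b :=
          Real.rpow_le_rpow (hΨnonneg _ hkε.le) h2 hb0.le
        have h4 : 0 ≤ c / (h - (k₀ + ε)) ^ a := by
          have := Real.rpow_pos_of_pos (by linarith : (0:ℝ) < h - (k₀ + ε)) a
          positivity
        calc Ψ h ≤ c / (h - (k₀ + ε)) ^ a * (Ψ (k₀ + ε)) ^ b := h1
          _ ≤ c / (h - (k₀ + ε)) ^ a * (Ψ k₀) ^ b :=
              mul_le_mul_of_nonneg_left h3 h4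
          _ = c / (h - k₀ - ε) ^ a * (Ψ k₀) ^ b := by ring_nf
      have hten : Filter.Tendsto (fun ε : ℝ => c / (h - k₀ - ε) ^ a * (Ψ k₀) ^ b)
          (nhdsWithin 0 (Set.Ioi 0)) (nhds (c / (h - k₀) ^ a * (Ψ k₀) ^ b)) := by
        have hca : ContinuousAt (fun ε : ℝ => c / (h - k₀ - ε) ^ a * (Ψ k₀) ^ b) 0 := by
          have h1 : ContinuousAt (fun ε : ℝ => h - k₀ - ε) 0 := by fun_prop
          have h2 : ContinuousAt (fun x : ℝ => x ^ a) (h - k₀) :=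
            Real.continuousAt_rpow_const _ _ (Or.inl hhk.ne')
          have h3 : ContinuousAt (fun ε : ℝ => (h - k₀ - ε) ^ a) 0 :=
            h1.rpow_const (Or.inl (by simpa using hhk.ne'))
          have h4 : (h - k₀ - (0:ℝ)) ^ a ≠ 0 := by
            rw [sub_zero]
            exact (Real.rpow_pos_of_pos hhk a).ne'
          exact (continuousAt_const.div h3 h4).mul continuousAt_const
        have := hca.tendsto.mono_left (nhdsWithin_le_nhds (s := Set.Ioi (0:ℝ)))
        simpa using this
      exact ge_of_tendsto hten hev
  -- the sequence
  set x : ℕ → ℝ := fun n => k₀ + d - d * 2 ^ (-(n : ℝ)) with hxdef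
  have hx0 : x 0 = k₀ := by simp [hxdef]
  have hxge : ∀ n, k₀ ≤ x n := by
    intro n
    have h1 : (2:ℝ) ^ (-(n:ℝ)) ≤ 1 :=
      Real.rpow_le_one_of_one_le_of_nonpos one_le_two
        (neg_nonpos.mpr (Nat.cast_nonneg n))
    have : d * 2 ^ (-(n:ℝ)) ≤ d * 1 := by nlinarith
    simp only [hxdef]; linarith
  have hxle : ∀ n, x n ≤ k₀ + d := by
    intro n
    have h1 : (0:ℝ) < 2 ^ (-(n:ℝ)) := Real.rpow_pos_of_pos two_pos _
    have : 0 < d * 2 ^ (-(n:ℝ)) := by positivity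
    simp only [hxdef]; linarith
  have hxdiff : ∀ n : ℕ, x (n+1) - x n = d * 2 ^ (-((n:ℝ)+1)) := by
    intro n
    have h1 : (2:ℝ) ^ (-(n:ℝ)) = 2 ^ (-((n:ℝ)+1)) * 2 := by
      rw [← Real.rpow_add_one (by norm_num : (2:ℝ) ≠ 0)]
      ring_nf
    simp only [hxdef]
    push_cast
    rw [show -((n:ℝ)+1) = -(n:ℝ)-1 by ring] at h1 ⊢
    nlinarith [h1]
  have hxlt : ∀ n : ℕ, x n < x (n+1) := by
    intro n
    have h1 := hxdiff n
    have h2 : (0:ℝ) < 2 ^ (-((n:ℝ)+1)) := Real.rpow_pos_of_pos two_pos _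
    nlinarith
  -- induction
  have main : ∀ n : ℕ, Ψ (x n) ≤ Ψ k₀ * 2 ^ (-(n:ℝ) * μ) := by
    intro n
    induction n with
    | zero => simp [hx0]
    | succ n ih =>
      push_cast
      have h1 := hiter' (x (n+1)) (x n) (hxge n) (hxlt n)
      rw [hxdiff n] at h1
      have h2 : (Ψ (x n)) ^ b ≤ (Ψ k₀ * 2 ^ (-(n:ℝ) * μ)) ^ b :=
        Real.rpow_le_rpow (hΨnonneg _ (hxge n)) ih hb0.le
      have h3 : 0 ≤ c / (d * 2 ^ (-((n:ℝ)+1))) ^ a := by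
        have := Real.rpow_pos_of_pos (by positivity : (0:ℝ) < d * 2 ^ (-((n:ℝ)+1))) a
        positivity
      have h4 := key_alg c a b d (Ψ k₀) μ (n:ℝ) hc ha hb hP hd0 hμdef hda
      calc Ψ (x (n+1)) ≤ c / (d * 2 ^ (-((n:ℝ)+1))) ^ a * (Ψ (x n)) ^ b := h1
        _ ≤ c / (d * 2 ^ (-((n:ℝ)+1))) ^ a * (Ψ k₀ * 2 ^ (-(n:ℝ) * μ)) ^ b :=
            mul_le_mul_of_nonneg_left h2 h3
        _ = Ψ k₀ * 2 ^ (-((n:ℝ)+1) * μ) := h4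
  -- conclude
  have hbound : ∀ n : ℕ, Ψ (k₀ + d) ≤ Ψ k₀ * 2 ^ (-(n:ℝ) * μ) := fun n =>
    (hΨmono (Set.mem_Ici.mpr (hxge n)) (Set.mem_Ici.mpr hkd) (hxle n)).trans (main n)
  have hten : Filter.Tendsto (fun n : ℕ => Ψ k₀ * 2 ^ (-(n:ℝ) * μ))
      Filter.atTop (nhds 0) := by
    have heq : ∀ n : ℕ, Ψ k₀ * 2 ^ (-(n:ℝ) * μ) = Ψ k₀ * ((2:ℝ) ^ (-μ)) ^ n := by
      intro n
      rw [show (-(n:ℝ) * μ) = (-μ) * (n:ℝ) by ring, Real.rpow_mul (by norm_num),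
        Real.rpow_natCast]
    simp only [heq]
    rw [show (0:ℝ) = Ψ k₀ * 0 by ring]
    exact (tendsto_pow_atTop_nhds_zero_of_lt_one
      (Real.rpow_nonneg (by norm_num) _)
      (Real.rpow_lt_one_of_one_lt_of_neg one_lt_two (neg_neg_iff_pos.mpr hμ))).const_mul _
  have : Ψ (k₀ + d) ≤ 0 := ge_of_tendsto hten (Filter.Eventually.of_forall hbound)
  linarith
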